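/- Let a ≥ 2 be an integer and k = ⌈√a⌉. For every positive integer n, every a-union-free subfamily of the Erdős–Shelah grid family {X_{ij} : 1 ≤ i, j ≤ n} has size at most 2kn. -/

import Mathlib

open Finset

/-- A family of sets is *`a`-union-free* if there are no `a+1` distinct sets
`X₁, …, X_{a+1} ` in the family with `X₁ ∪ ⋯ ∪ X_a = X_{a+1}`. -/
def AUnionFree (a : ℕ) (F : Finset (Finset ℕ)) : Prop :=
  ∀ X : Fin (a + 1) → Finset ℕ, Function.Injective X → (∀ i, X i ∈ F) →
    Finset.univ.sup (fun i : Fin a => X i.castSucc) ≠ X (Fin.last a)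

/-- The set `X_{ij} = {x ∈ ℕ : n + 1 - i ≤ x ≤ n + j}`. -/
def gridSet (n i j : ℕ) : Finset ℕ := Finset.Icc (n + 1 - i) (n + j)

/-- The Erdős–Shelah grid family `{X_{ij} : 1 ≤ i, j ≤ n}`. -/
def ESgrid (n : ℕ) : Finset (Finset ℕ) :=
  (Finset.Icc 1 n ×ˢ Finset.Icc 1 n).image fun p => gridSet n p.1 p.2

lemma gridSet_injOn (n : ℕ) {i j i' j' : ℕ} (hi : i ∈ Icc 1 n) (hi' : i' ∈ Icc 1 n)
    (hj : 1 ≤ j) (hj' : 1 ≤ j')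
    (he : gridSet n i j = gridSet n i' j') : i = i' ∧ j = j' := by
  simp only [mem_Icc] at hi hi'
  have h1 : n + j ∈ gridSet n i' j' := by
    rw [← he]; simp [gridSet, Finset.mem_Icc]; omega
  have h2 : n + j' ∈ gridSet n i j := by
    rw [he]; simp [gridSet, Finset.mem_Icc]; omega
  have h3 : n + 1 - i ∈ gridSet n i' j' := by
    rw [← he]; simp [gridSet, Finset.mem_Icc]; omega
  have h4 : n + 1 - i' ∈ gridSet n i j := by
    rw [he]; simp [gridSet, Finset.mem_Icc]; omega
  simp [gridSet, Finset.mem_Icc] at h1 h2 h3 h4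
  omega

lemma sup_gridSet (n : ℕ) {m : ℕ} (hm : 0 < m) (g : Fin m → ℕ × ℕ)
    (hg : ∀ t, 1 ≤ (g t).1 ∧ 1 ≤ (g t).2) :
    univ.sup (fun t => gridSet n (g t).1 (g t).2) =
      gridSet n (univ.sup fun t => (g t).1) (univ.sup fun t => (g t).2) := by
  have hne : (univ : Finset (Fin m)).Nonempty := univ_nonempty_iff.mpr ⟨⟨0, hm⟩⟩
  ext x
  simp only [Finset.mem_sup, gridSet, Finset.mem_Icc]
  constructor
  · rintro ⟨t, -, h1, h2⟩
    have hs1 : (g t).1 ≤ univ.sup fun t => (g t).1 := Finset.le_sup (f := fun t => (g t).1) (mem_univ t)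
    have hs2 : (g t).2 ≤ univ.sup fun t => (g t).2 := Finset.le_sup (f := fun t => (g t).2) (mem_univ t)
    omega
  · rintro ⟨h1, h2⟩
    rcases le_or_gt x n with hx | hx
    · obtain ⟨t, -, ht⟩ := Finset.exists_mem_eq_sup univ hne fun t => (g t).1
      exact ⟨t, mem_univ t, by omega⟩
    · obtain ⟨t, -, ht⟩ := Finset.exists_mem_eq_sup univ hne fun t => (g t).2
      have := (hg t).1
      exact ⟨t, mem_univ t, by omega⟩


lemma count_aux (k n : ℕ) (S : Finset (ℕ × ℕ)) (row col : ℕ × ℕ → ℕ)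
    (hrc : ∀ p ∈ S, ∀ q ∈ S, row p = row q → col p = col q → p = q)
    (hS : ∀ p ∈ S, row p ∈ Icc 1 n) :
    (S.filter fun p => (S.filter fun q => row q = row p ∧ col q < col p).card < k).card
      ≤ k * n := by
  have hmono : ∀ p ∈ S, ∀ q ∈ S, row p = row q → col p < col q →
      (S.filter fun r => row r = row p ∧ col r < col p).card
        < (S.filter fun r => row r = row q ∧ col r < col q).card := by
    intro p hp q hq hrow hcol
    apply Finset.card_lt_card
    constructor
    · intro r hr
      simp only [mem_filter] at hr ⊢
      exact ⟨hr.1, by omega⟩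
    · intro hsub
      have := hsub (by simp only [mem_filter]; exact ⟨hp, hrow, hcol⟩)
      simp only [mem_filter] at this
      omega
  calc (S.filter fun p => (S.filter fun q => row q = row p ∧ col q < col p).card < k).card
      ≤ ((Icc 1 n) ×ˢ (range k)).card := by
        apply Finset.card_le_card_of_injOn
          (fun p => (row p, (S.filter fun q => row q = row p ∧ col q < col p).card))
        · intro p hp
          simp only [mem_coe, mem_filter] at hp
          simp only [mem_coe, mem_product, mem_range]
          exact ⟨hS p hp.1, hp.2⟩
        · intro p hp q hq he
          simp only [mem_coe, mem_filter] at hp hq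
          have h1 : row p = row q := congrArg Prod.fst he
          have h2 := congrArg Prod.snd he
          simp only at h2
          rcases lt_trichotomy (col p) (col q) with hc | hc | hc
          · exact absurd h2 (by have := hmono p hp.1 q hq.1 h1 hc; omega)
          · exact hrc p hp.1 q hq.1 h1 hc
          · exact absurd h2 (by have := hmono q hq.1 p hp.1 h1.symm hc; omega)
    _ = k * n := by simp [Nat.card_Icc, mul_comm]


/-- For `a ≥ 2` and `k = ⌈√a⌉`, every `a`-union-free subfamily of the
Erdős–Shelah grid family `{X_{ij} : 1 ≤ i, j ≤ n}` has size at most `2kn`. -/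
theorem esgrid_aUnionFree_le (a k : ℕ) (ha : 2 ≤ a) (hk : k = ⌈Real.sqrt a⌉₊)
    (n : ℕ) (hn : 0 < n)
    (G : Finset (Finset ℕ)) (hG : G ⊆ ESgrid n) (h : AUnionFree a G) :
    G.card ≤ 2 * k * n := by
  -- basic facts about k
  have hk1 : 1 ≤ k := by
    rw [hk]
    have : (0:ℝ) < Real.sqrt a := Real.sqrt_pos.mpr (by positivity)
    exact Nat.one_le_ceil_iff.mpr this
  have hk2 : a ≤ k * k := by
    have h1 : Real.sqrt a ≤ (k : ℝ) := by rw [hk]; exact Nat.le_ceil _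
    have h2 : (a : ℝ) ≤ (k : ℝ) * (k : ℝ) := by
      nlinarith [Real.sq_sqrt (by positivity : (0:ℝ) ≤ (a:ℝ)),
        Real.sqrt_nonneg (a : ℝ)]
    exact_mod_cast h2
  -- translate to points
  set D := (Icc 1 n) ×ˢ (Icc 1 n) with hD
  set S := D.filter (fun p => gridSet n p.1 p.2 ∈ G) with hS
  have hSD : ∀ p ∈ S, p.1 ∈ Icc 1 n ∧ p.2 ∈ Icc 1 n := by
    intro p hp
    simp only [hS, hD, mem_filter, mem_product] at hp
    exact hp.1
  have hSG : ∀ p ∈ S, gridSet n p.1 p.2 ∈ G := by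
    intro p hp
    simp only [hS, mem_filter] at hp
    exact hp.2
  have hGS : G = S.image fun p => gridSet n p.1 p.2 := by
    apply Finset.Subset.antisymm
    · intro X hX
      have := hG hX
      simp only [ESgrid, mem_image] at this
      obtain ⟨q, hq, hqX⟩ := this
      simp only [mem_image]
      exact ⟨q, by simp only [hS, mem_filter]; exact ⟨hq, by rw [hqX]; exact hX⟩, hqX⟩
    · intro X hX
      simp only [mem_image] at hX
      obtain ⟨q, hq, hqX⟩ := hX
      rw [← hqX]; exact hSG q hq
  have hcard : G.card = S.card := by
    rw [hGS]
    apply Finset.card_image_of_injOn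
    intro p hp q hq he
    obtain ⟨hp1, hp2⟩ := hSD p hp
    obtain ⟨hq1, hq2⟩ := hSD q hq
    simp only [mem_Icc] at hp2 hq2
    obtain ⟨e1, e2⟩ := gridSet_injOn n hp1 hq1 hp2.1 hq2.1 he
    exact Prod.ext e1 e2
  rw [hcard]
  by_contra hlarge
  push_neg at hlarge
  -- rich points: at least k points strictly to the left in the same row
  set Rich := S.filter (fun p => ¬ ((S.filter fun q => q.1 = p.1 ∧ q.2 < p.2).card < k))
    with hRich
  have hRichCard : k * n < Rich.card := by
    have hpoor := count_aux k n S Prod.fst Prod.snd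
      (fun p _ q _ h1 h2 => Prod.ext h1 h2) (fun p hp => (hSD p hp).1)
    have heq : Rich = S \ S.filter (fun p => (S.filter fun q => q.1 = p.1 ∧ q.2 < p.2).card < k) := by
      rw [hRich, Finset.filter_not]
    rw [heq, Finset.card_sdiff_of_subset (Finset.filter_subset _ _)]
    have h2kn : 2 * k * n = k * n + k * n := by ring
    have hfs := Finset.card_filter_le S
      (fun p => (S.filter fun q => q.1 = p.1 ∧ q.2 < p.2).card < k)
    omega
  have hRichS : Rich ⊆ S := Finset.filter_subset _ _
  have hRichL : ∀ p ∈ Rich, k ≤ (S.filter fun q => q.1 = p.1 ∧ q.2 < p.2).card := by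
    intro p hp
    simp only [hRich, mem_filter, not_lt] at hp
    exact hp.2
  -- find a rich point with at least k rich points strictly below in the same column
  have hcol := count_aux k n Rich Prod.snd Prod.fst
    (fun p _ q _ h1 h2 => Prod.ext h2 h1)
    (fun p hp => (hSD p (hRichS hp)).2)
  have hex : ∃ p ∈ Rich, k ≤ (Rich.filter fun q => q.2 = p.2 ∧ q.1 < p.1).card := by
    by_contra hno
    push_neg at hno
    have : (Rich.filter fun p =>
        (Rich.filter fun q => q.2 = p.2 ∧ q.1 < p.1).card < k) = Rich :=
      Finset.filter_eq_self.mpr hno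
    rw [this] at hcol
    omega
  obtain ⟨p, hpRich, hpC⟩ := hex
  set C := Rich.filter (fun q => q.2 = p.2 ∧ q.1 < p.1) with hCdef
  set L := fun c : ℕ × ℕ => S.filter (fun q => q.1 = c.1 ∧ q.2 < c.2) with hLdef
  -- a point strictly left of p in p's row
  have hLp : k ≤ (L p).card := hRichL p hpRich
  obtain ⟨r, hrLp⟩ : (L p).Nonempty := Finset.card_pos.mp (by omega)
  have hr : r ∈ S ∧ r.1 = p.1 ∧ r.2 < p.2 := by
    simp only [hLdef, mem_filter] at hrLp; tauto
  obtain ⟨c₀, hc₀C⟩ : C.Nonempty := Finset.card_pos.mp (by omega)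
  have hc₀ : c₀ ∈ Rich ∧ c₀.2 = p.2 ∧ c₀.1 < p.1 := by
    simp only [hCdef, mem_filter] at hc₀C; tauto
  -- the pool
  set Pool := insert r (C ∪ C.biUnion L) with hPool
  have hPoolS : Pool ⊆ S := by
    intro q hq
    simp only [hPool, mem_insert, mem_union, mem_biUnion] at hq
    rcases hq with rfl | hq | ⟨c, hc, hqc⟩
    · exact hr.1
    · exact hRichS (Finset.mem_of_mem_filter _ hq)
    · exact Finset.mem_of_mem_filter _ hqc
  have hPoolDom : ∀ q ∈ Pool, q.1 ≤ p.1 ∧ q.2 ≤ p.2 ∧ q ≠ p := by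
    intro q hq
    simp only [hPool, mem_insert, mem_union, mem_biUnion] at hq
    rcases hq with rfl | hq | ⟨c, hc, hqc⟩
    · refine ⟨le_of_eq hr.2.1, le_of_lt hr.2.2, ?_⟩
      intro he; rw [he] at hr; omega
    · simp only [hCdef, mem_filter] at hq
      refine ⟨le_of_lt hq.2.2, le_of_eq hq.2.1, ?_⟩
      intro he; rw [he] at hq; omega
    · simp only [hCdef, mem_filter] at hc
      simp only [hLdef, mem_filter] at hqc
      refine ⟨by omega, by omega, ?_⟩
      intro he; rw [he] at hqc; omega
  -- pool is large
  have hdisjL : ∀ c₁ ∈ C, ∀ c₂ ∈ C, c₁ ≠ c₂ → Disjoint (L c₁) (L c₂) := by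
    intro c₁ hc₁ c₂ hc₂ hne
    simp only [hCdef, mem_filter] at hc₁ hc₂
    have h12 : c₁.1 ≠ c₂.1 := by
      intro he
      exact hne (Prod.ext he (hc₁.2.1.trans hc₂.2.1.symm))
    rw [Finset.disjoint_left]
    intro q hq1 hq2
    simp only [hLdef, mem_filter] at hq1 hq2
    omega
  have hbiCard : k * k ≤ (C.biUnion L).card := by
    rw [Finset.card_biUnion hdisjL]
    calc k * k ≤ C.card * k := Nat.mul_le_mul_right k hpC
    _ = ∑ _c ∈ C, k := by rw [Finset.sum_const, smul_eq_mul]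
    _ ≤ ∑ c ∈ C, (L c).card := by
        apply Finset.sum_le_sum
        intro c hc
        exact hRichL c (Finset.mem_of_mem_filter _ hc)
  have hdisjCB : Disjoint C (C.biUnion L) := by
    rw [Finset.disjoint_left]
    intro q hq1 hq2
    simp only [hCdef, mem_filter] at hq1
    simp only [mem_biUnion] at hq2
    obtain ⟨c, hc, hqc⟩ := hq2
    simp only [hCdef, mem_filter] at hc
    simp only [hLdef, mem_filter] at hqc
    omega
  have hPoolCard : a + 1 ≤ Pool.card := by
    have h1 : (C ∪ C.biUnion L).card = C.card + (C.biUnion L).card :=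
      Finset.card_union_of_disjoint hdisjCB
    have h2 : (C ∪ C.biUnion L).card ≤ Pool.card := by
      apply Finset.card_le_card
      simp only [hPool]
      exact Finset.subset_insert _ _
    have := hk2
    nlinarith [hpC, hbiCard]
  -- choose the a-element subfamily
  have hsdc : a - 2 ≤ (Pool \ {r, c₀}).card := by
    have h1 : Pool.card - 2 ≤ (Pool \ ({r, c₀} : Finset (ℕ × ℕ))).card := by
      have := Finset.le_card_sdiff ({r, c₀} : Finset (ℕ × ℕ)) Pool
      have h2 : ({r, c₀} : Finset (ℕ × ℕ)).card ≤ 2 := by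
        apply le_trans (Finset.card_insert_le _ _); simp
      omega
    omega
  obtain ⟨t, hts, htc⟩ := Finset.exists_subset_card_eq hsdc
  set T := insert r (insert c₀ t) with hT
  have hrc₀ : r ≠ c₀ := by
    intro he
    have h1 : r.2 = p.2 := by rw [he]; exact hc₀.2.1
    have := hr.2.2; omega
  have hrt : r ∉ insert c₀ t := by
    simp only [mem_insert]
    rintro (he | he)
    · exact hrc₀ he
    · have := hts he; simp at this
  have hc₀t : c₀ ∉ t := by
    intro he; have := hts he; simp at this
  have hTcard : T.card = a := by
    rw [hT, Finset.card_insert_of_notMem hrt, Finset.card_insert_of_notMem hc₀t, htc]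
    omega
  have hTP : T ⊆ Pool := by
    intro q hq
    simp only [hT, mem_insert] at hq
    rcases hq with rfl | rfl | hq
    · simp [hPool]
    · simp only [hPool, mem_insert, mem_union]
      exact Or.inr (Or.inl hc₀C)
    · exact (Finset.sdiff_subset) (hts hq)
  have hrT : r ∈ T := by simp [hT]
  have hc₀T : c₀ ∈ T := by simp [hT]
  -- build the violating family
  have e : { x // x ∈ T } ≃ Fin a := T.equivFinOfCardEq hTcard
  set f : Fin (a + 1) → ℕ × ℕ :=
    fun i => Fin.lastCases p (fun t => ((e.symm t : { x // x ∈ T }) : ℕ × ℕ)) i with hf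
  have hfS : ∀ i, f i ∈ S := by
    intro i
    refine Fin.lastCases ?_ ?_ i
    · simp only [hf, Fin.lastCases_last]
      exact hRichS hpRich
    · intro j
      simp only [hf, Fin.lastCases_castSucc]
      exact hPoolS (hTP (e.symm j).2)
  have hfcast : ∀ j : Fin a, f j.castSucc = ((e.symm j : { x // x ∈ T }) : ℕ × ℕ) := by
    intro j; simp only [hf, Fin.lastCases_castSucc]
  have hflast : f (Fin.last a) = p := by simp only [hf, Fin.lastCases_last]
  have hfne : ∀ j : Fin a, f j.castSucc ≠ p := by
    intro j
    rw [hfcast]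
    exact (hPoolDom _ (hTP (e.symm j).2)).2.2
  have hfinj : Function.Injective f := by
    intro i j hij
    cases i using Fin.lastCases with
    | last =>
      cases j using Fin.lastCases with
      | last => rfl
      | cast j' => exact absurd (hij.symm.trans hflast) (hfne j')
    | cast i' =>
      cases j using Fin.lastCases with
      | last => exact absurd (hij.trans hflast) (hfne i')
      | cast j' =>
        rw [hfcast, hfcast] at hij
        have h1 : e.symm i' = e.symm j' := Subtype.ext hij
        have h2 := e.symm.injective h1
        rw [h2]
  have ha0 : 0 < a := by omega
  have hg1 : ∀ t : Fin a, 1 ≤ (f t.castSucc).1 ∧ 1 ≤ (f t.castSucc).2 := by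
    intro t
    have := hSD _ (hfS t.castSucc)
    simp only [mem_Icc] at this
    exact ⟨this.1.1, this.2.1⟩
  have hXinj : Function.Injective (fun i => gridSet n (f i).1 (f i).2) := by
    intro i j hij
    have hi2 : 1 ≤ (f i).2 := by
      have := (hSD _ (hfS i)).2; simp only [mem_Icc] at this; exact this.1
    have hj2 : 1 ≤ (f j).2 := by
      have := (hSD _ (hfS j)).2; simp only [mem_Icc] at this; exact this.1
    obtain ⟨e1, e2⟩ := gridSet_injOn n (hSD _ (hfS i)).1 (hSD _ (hfS j)).1 hi2 hj2 hij
    exact hfinj (Prod.ext e1 e2)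
  have hmax1 : (univ.sup fun t : Fin a => (f t.castSucc).1) = p.1 := by
    apply le_antisymm
    · apply Finset.sup_le
      intro t _
      rw [hfcast t]
      exact (hPoolDom _ (hTP (e.symm t).2)).1
    · have htr : f ((e ⟨r, hrT⟩).castSucc) = r := by
        rw [hfcast]; simp
      calc p.1 = (f ((e ⟨r, hrT⟩).castSucc)).1 := by rw [htr, hr.2.1]
      _ ≤ _ := Finset.le_sup (f := fun t : Fin a => (f t.castSucc).1) (mem_univ _)
  have hmax2 : (univ.sup fun t : Fin a => (f t.castSucc).2) = p.2 := by
    apply le_antisymm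
    · apply Finset.sup_le
      intro t _
      rw [hfcast t]
      exact (hPoolDom _ (hTP (e.symm t).2)).2.1
    · have htr : f ((e ⟨c₀, hc₀T⟩).castSucc) = c₀ := by
        rw [hfcast]; simp
      calc p.2 = (f ((e ⟨c₀, hc₀T⟩).castSucc)).2 := by rw [htr, hc₀.2.1]
      _ ≤ _ := Finset.le_sup (f := fun t : Fin a => (f t.castSucc).2) (mem_univ _)
  refine h (fun i => gridSet n (f i).1 (f i).2) hXinj (fun i => hSG _ (hfS i)) ?_
  have hsup := sup_gridSet n ha0 (fun t : Fin a => f t.castSucc) hg1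
  rw [hsup, hmax1, hmax2, hflast]
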